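/- Fix n ∈ ℕ, n ≥ 1, and κ > 0. For p ∈ ℝ⁴ define the function g(p) = κ²(p₁² + p₂²)ⁿ + p₃² + p₄². Then for every p₄ ≠ 0, ∫_{ℝ³} dp₁ dp₂ dp₃ [4 κ² n² (p₁² + p₂²)^{n−1} p₄ / g(p)²] = 4π² n · sgn(p₄). -/

import Mathlib

open MeasureTheory Set Filter Real

lemma lemA {s : ℝ} (hs0 : 0 < s) :
    ∫ x : ℝ, ((s ^ 2 + x ^ 2) ^ 2)⁻¹ = Real.pi / (2 * s ^ 3) := by
  have hs : s ≠ 0 := hs0.ne'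
  have hderiv : ∀ x : ℝ, HasDerivAt
      (fun x : ℝ => Real.arctan (x / s) / (2 * s ^ 3)
        + x / (s ^ 2 + x ^ 2) / (2 * s ^ 2)) (((s ^ 2 + x ^ 2) ^ 2)⁻¹) x := by
    intro x
    have hbx : s ^ 2 + x ^ 2 ≠ 0 := by positivity
    have h1 : HasDerivAt (fun x : ℝ => x / s) (1 / s) x := by
      simpa using (hasDerivAt_id x).div_const s
    have h2 : HasDerivAt (fun x : ℝ => Real.arctan (x / s))
        ((1 / (1 + (x / s) ^ 2)) * (1 / s)) x :=
      by simpa [Function.comp_def] using (Real.hasDerivAt_arctan (x / s)).comp x h1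
    have h3 := h2.div_const (2 * s ^ 3)
    have h4 : HasDerivAt (fun x : ℝ => s ^ 2 + x ^ 2) (2 * x) x := by
      simpa using (hasDerivAt_pow 2 x).const_add (s ^ 2)
    have h5 : HasDerivAt (fun x : ℝ => x / (s ^ 2 + x ^ 2))
        ((1 * (s ^ 2 + x ^ 2) - x * (2 * x)) / (s ^ 2 + x ^ 2) ^ 2) x :=
      (hasDerivAt_id x).div h4 hbx
    have h6 := h5.div_const (2 * s ^ 2)
    have h7 := h3.add h6
    refine h7.congr_deriv ?_
    have h8 : 1 + (x / s) ^ 2 = (s ^ 2 + x ^ 2) / s ^ 2 := by field_simp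
    rw [h8]
    field_simp
    ring
  have hpos : ∀ x ∈ Ioi (0 : ℝ), (0:ℝ) ≤ ((s ^ 2 + x ^ 2) ^ 2)⁻¹ := by
    intro x _; positivity
  have htop : Tendsto (fun x : ℝ => Real.arctan (x / s) / (2 * s ^ 3)
      + x / (s ^ 2 + x ^ 2) / (2 * s ^ 2)) atTop
      (nhds ((Real.pi / 2) / (2 * s ^ 3) + 0)) := by
    apply Tendsto.add
    · exact ((Real.tendsto_arctan_atTop.mono_right nhdsWithin_le_nhds).comp
        (tendsto_id.atTop_div_const hs0)).div_const _
    · have hb1 : Tendsto (fun x : ℝ => 1 / (2 * s ^ 2 * x)) atTop (nhds 0) := by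
        apply Tendsto.div_atTop tendsto_const_nhds
        exact Tendsto.const_mul_atTop (by positivity) tendsto_id
      apply squeeze_zero' (Filter.eventually_atTop.2 ⟨1, fun x hx => by positivity⟩)
        (Filter.eventually_atTop.2 ⟨1, fun x hx => ?_⟩) hb1
      rw [div_div, div_le_div_iff₀ (by positivity) (by positivity)]
      nlinarith
  have key := integral_Ioi_of_hasDerivAt_of_nonneg' (fun x _ => hderiv x) hpos htop
  simp only [Real.arctan_zero, zero_div, zero_add, add_zero, zero_pow, zero_mul, mul_zero] at key
  have heven : (∫ x : ℝ, ((s ^ 2 + x ^ 2) ^ 2)⁻¹)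
      = 2 * ∫ x in Ioi (0:ℝ), ((s ^ 2 + x ^ 2) ^ 2)⁻¹ := by
    rw [← integral_comp_abs (f := fun y => ((s ^ 2 + y ^ 2) ^ 2)⁻¹)]
    simp [sq_abs]
  rw [heven, key]
  ring

section
variable (n : ℕ) (κ p₄ : ℝ)

-- radial integrand after inner integral and polar coordinates
noncomputable def Frad : ℝ → ℝ := fun r =>
  r * (4 * κ ^ 2 * (n : ℝ) ^ 2 * (r ^ 2) ^ (n - 1) * p₄ *
      (Real.pi / (2 * Real.sqrt (κ ^ 2 * (r ^ 2) ^ n + p₄ ^ 2) ^ 3)))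

lemma Frad_deriv (hn : 1 ≤ n) (hκ : 0 < κ) (hp₄ : 0 < p₄) (r : ℝ) :
    HasDerivAt (fun r => -(2 * Real.pi * (n : ℝ) * p₄) *
        (Real.sqrt (κ ^ 2 * (r ^ 2) ^ n + p₄ ^ 2))⁻¹) (Frad n κ p₄ r) r := by
  have hu : 0 < κ ^ 2 * (r ^ 2) ^ n + p₄ ^ 2 := by positivity
  have hs0 : 0 < Real.sqrt (κ ^ 2 * (r ^ 2) ^ n + p₄ ^ 2) := Real.sqrt_pos.2 hu
  have e2 : HasDerivAt (fun x : ℝ => x ^ 2) (2 * r) r := by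
    simpa using hasDerivAt_pow 2 r
  have d1 : HasDerivAt (fun r : ℝ => (r ^ 2) ^ n) ((n : ℝ) * (r ^ 2) ^ (n - 1) * (2 * r)) r := by
    simpa [Function.comp_def] using (hasDerivAt_pow n (r ^ 2)).comp r e2
  have d2 : HasDerivAt (fun r : ℝ => κ ^ 2 * (r ^ 2) ^ n + p₄ ^ 2)
      (κ ^ 2 * ((n : ℝ) * (r ^ 2) ^ (n - 1) * (2 * r))) r := (d1.const_mul (κ ^ 2)).add_const _
  have d3 : HasDerivAt (fun r : ℝ => Real.sqrt (κ ^ 2 * (r ^ 2) ^ n + p₄ ^ 2))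
      (1 / (2 * Real.sqrt (κ ^ 2 * (r ^ 2) ^ n + p₄ ^ 2)) *
        (κ ^ 2 * ((n : ℝ) * (r ^ 2) ^ (n - 1) * (2 * r)))) r := by
    simpa [Function.comp_def] using (Real.hasDerivAt_sqrt hu.ne').comp r d2
  have d4 := d3.inv hs0.ne'
  have d5 := d4.const_mul (-(2 * Real.pi * (n : ℝ) * p₄))
  refine d5.congr_deriv ?_
  simp only [Frad]
  rw [show Real.sqrt (κ ^ 2 * (r ^ 2) ^ n + p₄ ^ 2) ^ 3
      = (κ ^ 2 * (r ^ 2) ^ n + p₄ ^ 2) * Real.sqrt (κ ^ 2 * (r ^ 2) ^ n + p₄ ^ 2) from by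
    rw [pow_succ, Real.sq_sqrt hu.le]]
  rw [Real.sq_sqrt hu.le]
  field_simp
  ring
end

lemma radial_int (n : ℕ) (hn : 1 ≤ n) (κ : ℝ) (hκ : 0 < κ) (p₄ : ℝ) (hp₄ : 0 < p₄) :
    (∫ r in Ioi (0:ℝ), Frad n κ p₄ r) = 2 * Real.pi * n ∧
      IntegrableOn (Frad n κ p₄) (Ioi (0:ℝ)) := by
  have hn0 : n ≠ 0 := by omega
  have hpos : ∀ r ∈ Ioi (0:ℝ), 0 ≤ Frad n κ p₄ r := by
    intro r hr
    exact mul_nonneg (le_of_lt hr) (by positivity)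
  have htop : Tendsto (fun r : ℝ => -(2 * Real.pi * (n : ℝ) * p₄) *
      (Real.sqrt (κ ^ 2 * (r ^ 2) ^ n + p₄ ^ 2))⁻¹) atTop (nhds 0) := by
    have h1 : Tendsto (fun r : ℝ => κ ^ 2 * (r ^ 2) ^ n + p₄ ^ 2) atTop atTop := by
      apply tendsto_atTop_add_const_right
      apply Tendsto.const_mul_atTop (by positivity : (0:ℝ) < κ ^ 2)
      exact (tendsto_pow_atTop hn0).comp (tendsto_pow_atTop two_ne_zero)
    have h2 : Tendsto (fun r : ℝ => (Real.sqrt (κ ^ 2 * (r ^ 2) ^ n + p₄ ^ 2))⁻¹)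
        atTop (nhds 0) := by
      have h3 := (Real.continuous_sqrt.tendsto 0).comp h1.inv_tendsto_atTop
      rw [Real.sqrt_zero] at h3
      have h4 : ((fun x : ℝ => Real.sqrt x) ∘ (fun r : ℝ => κ ^ 2 * (r ^ 2) ^ n + p₄ ^ 2)⁻¹)
          = fun r : ℝ => (Real.sqrt (κ ^ 2 * (r ^ 2) ^ n + p₄ ^ 2))⁻¹ := by
        funext r
        simp [Function.comp, Pi.inv_apply, Real.sqrt_inv]
      rwa [h4] at h3
    simpa using h2.const_mul (-(2 * Real.pi * (n : ℝ) * p₄))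
  constructor
  · have key := integral_Ioi_of_hasDerivAt_of_nonneg'
      (fun r _ => Frad_deriv n κ p₄ hn hκ hp₄ r) hpos htop
    rw [key]
    rw [show ((0:ℝ) ^ 2) ^ n = 0 by simp [hn0]]
    rw [show κ ^ 2 * 0 + p₄ ^ 2 = p₄ ^ 2 by ring, Real.sqrt_sq hp₄.le]
    field_simp
    ring
  · exact integrableOn_Ioi_deriv_of_nonneg'
      (fun r _ => Frad_deriv n κ p₄ hn hκ hp₄ r) hpos htop


noncomputable def F2 (n : ℕ) (κ p₄ : ℝ) : ℝ × ℝ → ℝ := fun q =>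
  4 * κ ^ 2 * (n : ℝ) ^ 2 * (q.1 ^ 2 + q.2 ^ 2) ^ (n - 1) * p₄ *
    (Real.pi / (2 * Real.sqrt (κ ^ 2 * (q.1 ^ 2 + q.2 ^ 2) ^ n + p₄ ^ 2) ^ 3))

lemma hpol (n : ℕ) (κ p₄ : ℝ) (p : ℝ × ℝ) :
    p.1 • F2 n κ p₄ (polarCoord.symm p) = Frad n κ p₄ p.1 := by
  have hsymm : polarCoord.symm p = (p.1 * Real.cos p.2, p.1 * Real.sin p.2) := rfl
  have hxy : (p.1 * Real.cos p.2) ^ 2 + (p.1 * Real.sin p.2) ^ 2 = p.1 ^ 2 := by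
    have h := Real.sin_sq_add_cos_sq p.2; nlinarith
  rw [hsymm]
  simp only [F2, Frad, smul_eq_mul]
  rw [hxy]

lemma htarget : polarCoord.target = Set.Ioi (0:ℝ) ×ˢ Set.Ioo (-Real.pi) Real.pi := rfl


lemma F2_integrable (n : ℕ) (hn : 1 ≤ n) (κ : ℝ) (hκ : 0 < κ) (p₄ : ℝ) (hp₄ : 0 < p₄)
    (hrad : IntegrableOn (Frad n κ p₄) (Ioi (0:ℝ))) :
    Integrable (F2 n κ p₄) := by
  have hmes : MeasurableSet polarCoord.target := polarCoord.open_target.measurableSet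
  -- integrability of the polar-side function on the target
  have h1 : IntegrableOn (fun p : ℝ × ℝ => Frad n κ p₄ p.1 * (1:ℝ))
      (Set.Ioi (0:ℝ) ×ˢ Set.Ioo (-Real.pi) Real.pi) := by
    rw [IntegrableOn, Measure.volume_eq_prod, ← Measure.prod_restrict]
    exact Integrable.mul_prod hrad (integrableOn_const measure_Ioo_lt_top.ne)
  have h2 : IntegrableOn (fun p : ℝ × ℝ => p.1 • F2 n κ p₄ (polarCoord.symm p))
      polarCoord.target := by
    rw [htarget]
    apply h1.congr_fun _ (measurableSet_Ioi.prod measurableSet_Ioo)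
    intro p _
    simp only [hpol, mul_one]
  -- change of variables
  set B : ℝ × ℝ → ℝ × ℝ →L[ℝ] ℝ × ℝ := fun p =>
    LinearMap.toContinuousLinearMap (Matrix.toLin (Module.Basis.finTwoProd ℝ) (Module.Basis.finTwoProd ℝ)
      !![Real.cos p.2, -p.1 * Real.sin p.2; Real.sin p.2, p.1 * Real.cos p.2]) with hB
  have hBder : ∀ p ∈ polarCoord.target,
      HasFDerivWithinAt polarCoord.symm (B p) polarCoord.target p := fun p _ =>
    (hasFDerivAt_polarCoord_symm p).hasFDerivWithinAt
  have hBdet : ∀ p : ℝ × ℝ, (B p).det = p.1 := by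
    intro p
    conv_rhs => rw [← one_mul p.1, ← Real.cos_sq_add_sin_sq p.2]
    simp only [hB, neg_mul, LinearMap.det_toContinuousLinearMap, LinearMap.det_toLin,
      Matrix.det_fin_two_of, sub_neg_eq_add]
    ring
  have hinj : Set.InjOn polarCoord.symm polarCoord.target := polarCoord.symm.injOn
  have hiff := integrableOn_image_iff_integrableOn_abs_det_fderiv_smul volume hmes hBder hinj
      (F2 n κ p₄)
  rw [polarCoord.symm_image_target_eq_source] at hiff
  have h3 : IntegrableOn (F2 n κ p₄) polarCoord.source := by
    rw [hiff]
    apply h2.congr_fun _ hmes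
    intro p hp
    have hp1 : (0:ℝ) < p.1 := hp.1
    simp only [hBdet, abs_of_pos hp1]
  rw [← integrableOn_univ]
  exact h3.congr_set_ae polarCoord_source_ae_eq_univ.symm


lemma F2_polar_eval (n : ℕ) (κ p₄ : ℝ) :
    ∫ q : ℝ × ℝ, F2 n κ p₄ q = (∫ r in Ioi (0:ℝ), Frad n κ p₄ r) * (2 * Real.pi) := by
  rw [← integral_comp_polarCoord_symm (F2 n κ p₄)]
  have step1 : (∫ p in polarCoord.target, p.1 • F2 n κ p₄ (polarCoord.symm p))
      = ∫ p in Set.Ioi (0:ℝ) ×ˢ Set.Ioo (-Real.pi) Real.pi,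
          Frad n κ p₄ p.1 * (1:ℝ) := by
    rw [htarget]
    apply setIntegral_congr_fun (measurableSet_Ioi.prod measurableSet_Ioo)
    intro p _
    simp only [hpol, mul_one]
  rw [step1, Measure.volume_eq_prod]
  have step2 : (∫ p in Set.Ioi (0:ℝ) ×ˢ Set.Ioo (-Real.pi) Real.pi,
        Frad n κ p₄ p.1 * (1:ℝ) ∂(volume.prod volume))
      = (∫ r in Ioi (0:ℝ), Frad n κ p₄ r) * ∫ _ in Set.Ioo (-Real.pi) Real.pi, (1:ℝ) :=
    setIntegral_prod_mul (fun r => Frad n κ p₄ r) (fun _ => (1:ℝ)) (Set.Ioi 0) (Set.Ioo (-Real.pi) Real.pi)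
  rw [step2]
  congr 1
  rw [setIntegral_const]
  simp only [measureReal_def, Real.volume_Ioo, smul_eq_mul, mul_one, sub_neg_eq_add,
    ENNReal.toReal_ofReal (by positivity : (0:ℝ) ≤ Real.pi + Real.pi)]
  ring

lemma inner_int (n : ℕ) (κ : ℝ) (hκ : 0 < κ) (p₄ : ℝ) (hp₄ : 0 < p₄) (p₁ p₂ : ℝ) :
    (∫ p₃ : ℝ, 4 * κ ^ 2 * (n : ℝ) ^ 2 * (p₁ ^ 2 + p₂ ^ 2) ^ (n - 1) * p₄ /
        (κ ^ 2 * (p₁ ^ 2 + p₂ ^ 2) ^ n + p₃ ^ 2 + p₄ ^ 2) ^ 2)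
      = F2 n κ p₄ (p₁, p₂) := by
  have hb : 0 < κ ^ 2 * (p₁ ^ 2 + p₂ ^ 2) ^ n + p₄ ^ 2 := by positivity
  have hs0 : 0 < Real.sqrt (κ ^ 2 * (p₁ ^ 2 + p₂ ^ 2) ^ n + p₄ ^ 2) := Real.sqrt_pos.2 hb
  have hre : ∀ p₃ : ℝ, 4 * κ ^ 2 * (n : ℝ) ^ 2 * (p₁ ^ 2 + p₂ ^ 2) ^ (n - 1) * p₄ /
        (κ ^ 2 * (p₁ ^ 2 + p₂ ^ 2) ^ n + p₃ ^ 2 + p₄ ^ 2) ^ 2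
      = 4 * κ ^ 2 * (n : ℝ) ^ 2 * (p₁ ^ 2 + p₂ ^ 2) ^ (n - 1) * p₄ *
        (((Real.sqrt (κ ^ 2 * (p₁ ^ 2 + p₂ ^ 2) ^ n + p₄ ^ 2)) ^ 2 + p₃ ^ 2) ^ 2)⁻¹ := by
    intro p₃
    rw [Real.sq_sqrt hb.le, div_eq_mul_inv]
    ring
  simp_rw [hre]
  rw [integral_const_mul, lemA hs0]
  simp only [F2]

theorem keyPos (n : ℕ) (hn : 1 ≤ n) (κ : ℝ) (hκ : 0 < κ) (p₄ : ℝ) (hp₄ : 0 < p₄) :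
    (∫ p₁ : ℝ, ∫ p₂ : ℝ, ∫ p₃ : ℝ,
        4 * κ ^ 2 * (n : ℝ) ^ 2 * (p₁ ^ 2 + p₂ ^ 2) ^ (n - 1) * p₄ /
          (κ ^ 2 * (p₁ ^ 2 + p₂ ^ 2) ^ n + p₃ ^ 2 + p₄ ^ 2) ^ 2)
      = 4 * Real.pi ^ 2 * (n : ℝ) := by
  have hrad := radial_int n hn κ hκ p₄ hp₄
  have hFint := F2_integrable n hn κ hκ p₄ hp₄ hrad.2
  simp_rw [inner_int n κ hκ p₄ hp₄]
  have hFint' : Integrable (Function.uncurry fun p₁ p₂ => F2 n κ p₄ (p₁, p₂))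
      (volume.prod volume) := by
    rw [← Measure.volume_eq_prod]
    exact hFint.congr (Filter.Eventually.of_forall fun z => by simp [Function.uncurry])
  rw [integral_integral hFint', ← Measure.volume_eq_prod]
  rw [show (fun z : ℝ × ℝ => F2 n κ p₄ (z.1, z.2)) = F2 n κ p₄ from
    funext fun z => by rw [Prod.mk.eta]]
  rw [F2_polar_eval, hrad.1]
  ring

/-- for `n ≥ 1`, `κ > 0`, `g(p) = κ²(p₁²+p₂²)ⁿ + p₃² + p₄²`, and `p₄ ≠ 0`,
`∫_{ℝ³} 4κ²n²(p₁²+p₂²)^{n−1} p₄ / g(p)² dp₁dp₂dp₃ = 4π² n sgn(p₄)`. -/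
theorem winding_integral_eq
    (n : ℕ) (hn : 1 ≤ n) (κ : ℝ) (hκ : 0 < κ) (p₄ : ℝ) (hp₄ : p₄ ≠ 0) :
    (∫ p₁ : ℝ, ∫ p₂ : ℝ, ∫ p₃ : ℝ,
        4 * κ ^ 2 * (n : ℝ) ^ 2 * (p₁ ^ 2 + p₂ ^ 2) ^ (n - 1) * p₄ /
          (κ ^ 2 * (p₁ ^ 2 + p₂ ^ 2) ^ n + p₃ ^ 2 + p₄ ^ 2) ^ 2)
      = 4 * Real.pi ^ 2 * (n : ℝ) * Real.sign p₄ := by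
  rcases hp₄.lt_or_gt with h | h
  · have hneg : ∀ p₁ p₂ p₃ : ℝ,
        4 * κ ^ 2 * (n : ℝ) ^ 2 * (p₁ ^ 2 + p₂ ^ 2) ^ (n - 1) * p₄ /
          (κ ^ 2 * (p₁ ^ 2 + p₂ ^ 2) ^ n + p₃ ^ 2 + p₄ ^ 2) ^ 2
        = -(4 * κ ^ 2 * (n : ℝ) ^ 2 * (p₁ ^ 2 + p₂ ^ 2) ^ (n - 1) * (-p₄) /
          (κ ^ 2 * (p₁ ^ 2 + p₂ ^ 2) ^ n + p₃ ^ 2 + (-p₄) ^ 2) ^ 2) := by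
      intros; ring
    simp_rw [hneg, integral_neg]
    rw [keyPos n hn κ hκ (-p₄) (by linarith), Real.sign_of_neg h]
    ring
  · rw [keyPos n hn κ hκ p₄ h, Real.sign_of_pos h]
    ring
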